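/- Let a ∈ ℂ, let f_a(z) = e^z + a, and let F(t) = e^t − 1 with F^k its k-th iterate. For z ∈ ℂ, the following are equivalent: (i) z ∈ A(f_a); (ii) there exist T > 0 and n₀ ∈ ℕ such that |f_a^{n₀+k}(z)| ≥ F^k(T) for all k ∈ ℕ; (iii) for every T > 0 there exists n₀ ∈ ℕ such that |f_a^{n₀+k}(z)| ≥ F^k(T) for all k ∈ ℕ. -/

import Mathlib

open Filter Set Metric Bornology

/-- The exponential map `f_a(z) = e^z + a`. -/
noncomputable def expMap (a : ℂ) : ℂ → ℂ := fun z => Complex.exp z + a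

/-- The escaping set `I(f_a) = {z : |f_a^n(z)| → ∞}`. -/
def escapingSet (a : ℂ) : Set ℂ :=
  {z | Tendsto (fun n => ‖(expMap a)^[n] z‖) atTop atTop}

/-- The maximum modulus `M(r, f_a) = max_{|z| = r} |e^z + a|`. -/
noncomputable def maxMod (a : ℂ) (r : ℝ) : ℝ :=
  sSup ((fun z => ‖expMap a z‖) '' Metric.sphere (0 : ℂ) r)

/-- The fast escaping set `A(f_a)`. -/
def fastEscapingSet (a : ℂ) : Set ℂ :=
  {z | ∀ R > (0 : ℝ), ∃ l : ℕ, ∀ n : ℕ, (maxMod a)^[n] R ≤ ‖(expMap a)^[n + l] z‖}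

/-- The set `A_R(f_a) = {z : |f_a^n(z)| ≥ M^n(R, f_a) for all n}`. -/
def levelFastSet (a : ℂ) (R : ℝ) : Set ℂ :=
  {z | ∀ n : ℕ, (maxMod a)^[n] R ≤ ‖(expMap a)^[n] z‖}

/-- The model growth function `F(t) = e^t - 1`. -/
noncomputable def Fgrowth : ℝ → ℝ := fun t => Real.exp t - 1

/-- The cycle `{p, f_a(p), …, f_a^{m-1}(p)}`. -/
def cycleSet (a p : ℂ) (m : ℕ) : Set ℂ := {w | ∃ k < m, (expMap a)^[k] p = w}

/-- The basin of attraction of a set `C`: points whose orbits converge to `C`. -/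
def basin (a : ℂ) (C : Set ℂ) : Set ℂ :=
  {z | Tendsto (fun k => Metric.infDist ((expMap a)^[k] z) C) atTop (nhds 0)}

/-- A topological space is totally separated if any two distinct points can be
separated by a clopen set containing the first but not the second. -/
def TotallySeparatedClopen (X : Type*) [TopologicalSpace X] : Prop :=
  ∀ a b : X, a ≠ b → ∃ U : Set X, IsClopen U ∧ a ∈ U ∧ b ∉ U

/-- `z₀` is on a hair: there is an injective continuous arc through `z₀`
contained in the escaping set. -/
def OnHair (a z₀ : ℂ) : Prop :=
  ∃ γ : ℝ → ℂ, ContinuousOn γ (Set.Icc (-1) 1) ∧ Set.InjOn γ (Set.Icc (-1) 1) ∧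
    γ 0 = z₀ ∧ ∀ t ∈ Set.Icc (-1 : ℝ) 1, γ t ∈ escapingSet a

/-- `z₀` is an endpoint: it is not on a hair, and there is an arc starting at `z₀`
which lies in the escaping set except possibly at `z₀` itself. -/
def IsEndpoint (a z₀ : ℂ) : Prop :=
  ¬ OnHair a z₀ ∧ ∃ γ : ℝ → ℂ, ContinuousOn γ (Set.Icc 0 1) ∧ γ 0 = z₀ ∧
    ∀ t ∈ Set.Icc (0 : ℝ) 1, 0 < t → γ t ∈ escapingSet a

/-- The set `E(f_a)` of endpoints. -/
def endpoints (a : ℂ) : Set ℂ := {z | IsEndpoint a z}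

/-- `E` separates the set `X` from `∞`: in the subspace `(ℂ \ E) ∪ X ∪ {∞}` of the
one-point compactification, there is a clopen set containing `X` but not `∞`. -/
def SeparatesFromInfty (E X : Set ℂ) : Prop :=
  ∃ U : Set ↥(((fun z : ℂ => (z : OnePoint ℂ)) '' (Eᶜ ∪ X)) ∪ {OnePoint.infty}),
    IsClopen U ∧
    (∀ x : ↥(((fun z : ℂ => (z : OnePoint ℂ)) '' (Eᶜ ∪ X)) ∪ {OnePoint.infty}),
      (x : OnePoint ℂ) ∈ (fun z : ℂ => (z : OnePoint ℂ)) '' X → x ∈ U) ∧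
    (∀ x : ↥(((fun z : ℂ => (z : OnePoint ℂ)) '' (Eᶜ ∪ X)) ∪ {OnePoint.infty}),
      (x : OnePoint ℂ) = OnePoint.infty → x ∉ U)

/-- There is an exhausting sequence of bounded simply connected domains whose
boundaries lie in `E`. -/
def SpiderWebSeq (E : Set ℂ) : Prop :=
  ∃ G : ℕ → Set ℂ,
    (∀ n, IsOpen (G n) ∧ IsConnected (G n) ∧ IsBounded (G n) ∧ SimplyConnectedSpace (G n)) ∧
    (∀ n, G n ⊆ G (n + 1)) ∧ (∀ n, frontier (G n) ⊆ E) ∧ (⋃ n, G n) = Set.univ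

/-- `E` is a spider's web: `E` is connected and admits an exhausting sequence of
bounded simply connected domains with boundaries in `E`. -/
def IsSpidersWeb (E : Set ℂ) : Prop := IsConnected E ∧ SpiderWebSeq E

private lemma le_Fg (t : ℝ) : t ≤ Fgrowth t := by
  have := Real.add_one_le_exp t
  simp only [Fgrowth]; linarith

private lemma Fg_mono : Monotone Fgrowth := fun x y h => by
  simp only [Fgrowth]
  have := Real.exp_le_exp.2 h
  linarith

private lemma le_Fg_iter (t : ℝ) (n : ℕ) : t ≤ Fgrowth^[n] t := by
  induction n with
  | zero => simp
  | succ n ih =>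
    rw [Function.iterate_succ_apply']
    exact le_trans ih (le_Fg _)

private lemma Fg_quad {t : ℝ} (ht : 0 ≤ t) : t + t ^ 2 / 4 ≤ Fgrowth t := by
  have h1 : t / 2 + 1 ≤ Real.exp (t / 2) := by linarith [Real.add_one_le_exp (t / 2)]
  have h2 : Real.exp t = Real.exp (t / 2) * Real.exp (t / 2) := by
    rw [← Real.exp_add]; ring_nf
  have h3 := mul_self_le_mul_self (by linarith : (0:ℝ) ≤ t / 2 + 1) h1
  have h4 : Fgrowth t = Real.exp t - 1 := rfl
  rw [h4]; nlinarith

private lemma Fg_unbounded {T : ℝ} (hT : 0 < T) (C : ℝ) : ∃ j : ℕ, C ≤ Fgrowth^[j] T := by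
  have grow : ∀ j : ℕ, T + j * (T ^ 2 / 4) ≤ Fgrowth^[j] T := by
    intro j
    induction j with
    | zero => simp
    | succ j ih =>
      rw [Function.iterate_succ_apply']
      have h0 : 0 ≤ Fgrowth^[j] T := le_trans hT.le (le_Fg_iter T j)
      have hq := Fg_quad h0
      have hsq : T ^ 2 ≤ (Fgrowth^[j] T) ^ 2 := pow_le_pow_left₀ hT.le (le_Fg_iter T j) 2
      push_cast
      nlinarith
  obtain ⟨j, hj⟩ := exists_nat_ge ((C - T) / (T ^ 2 / 4))
  refine ⟨j, le_trans ?_ (grow j)⟩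
  have h4 : (0:ℝ) < T ^ 2 / 4 := by positivity
  rw [div_le_iff₀ h4] at hj
  linarith

private lemma maxMod_mem_bound (a : ℂ) (r : ℝ) :
    ∀ x ∈ (fun z => ‖expMap a z‖) '' Metric.sphere (0 : ℂ) r,
      x ≤ Real.exp r + ‖a‖ := by
  rintro x ⟨w, hw, rfl⟩
  rw [mem_sphere_zero_iff_norm] at hw
  have hre : w.re ≤ r := by
    calc w.re ≤ ‖w‖ := Complex.re_le_norm w
      _ = r := by rw [hw]
  calc ‖expMap a w‖ ≤ ‖Complex.exp w‖ + ‖a‖ := by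
        simpa [expMap] using norm_add_le (Complex.exp w) a
    _ ≤ Real.exp r + ‖a‖ := by
        rw [Complex.norm_exp]
        have := Real.exp_le_exp.2 hre
        linarith

private lemma maxMod_le (a : ℂ) (r : ℝ) : maxMod a r ≤ Real.exp r + ‖a‖ :=
  Real.sSup_le (maxMod_mem_bound a r) (by positivity)

private lemma le_maxMod (a : ℂ) {r : ℝ} (hr : 0 ≤ r) :
    ‖Complex.exp (r : ℂ) + a‖ ≤ maxMod a r := by
  apply le_csSup ⟨Real.exp r + ‖a‖, fun x hx => maxMod_mem_bound a r x hx⟩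
  exact ⟨(r : ℂ), by simp [mem_sphere_zero_iff_norm, abs_of_nonneg hr], rfl⟩

private lemma maxMod_key (a : ℂ) {t r : ℝ}
    (ht : Real.log (1 + ‖a‖) ≤ t) (hr : t + 1 ≤ r) :
    Fgrowth t + 1 ≤ maxMod a r := by
  have b0 : (0:ℝ) ≤ ‖a‖ := norm_nonneg a
  have ht0 : 0 ≤ t := le_trans (Real.log_nonneg (by linarith)) ht
  have hr0 : (0:ℝ) ≤ r := by linarith
  have hea : 1 + ‖a‖ ≤ Real.exp t := by
    calc 1 + ‖a‖ = Real.exp (Real.log (1 + ‖a‖)) :=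
          (Real.exp_log (by linarith)).symm
      _ ≤ Real.exp t := Real.exp_le_exp.2 ht
  have h1 : Real.exp r ≤ ‖Complex.exp (r : ℂ) + a‖ + ‖a‖ := by
    have h := norm_add_le (Complex.exp (r : ℂ) + a) (-a)
    simp only [add_neg_cancel_right, norm_neg] at h
    rw [Complex.norm_exp, Complex.ofReal_re] at h
    exact h
  have h2 : Real.exp (t + 1) ≤ Real.exp r := Real.exp_le_exp.2 hr
  have h3 : Real.exp (t + 1) = Real.exp t * Real.exp 1 := Real.exp_add t 1
  have h4 : (2:ℝ) ≤ Real.exp 1 := by linarith [Real.add_one_le_exp (1:ℝ)]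
  have h5 : Fgrowth t = Real.exp t - 1 := rfl
  have h6 := le_maxMod a hr0
  rw [h5]
  nlinarith [Real.exp_pos t]

private lemma fastEscaping_main1 (a z : ℂ) (hz : z ∈ fastEscapingSet a) :
    ∀ T > (0 : ℝ), ∃ n₀ : ℕ, ∀ k : ℕ, Fgrowth^[k] T ≤ ‖(expMap a)^[n₀ + k] z‖ := by
  intro T hT
  set T' := max T (Real.log (1 + ‖a‖)) with hT'
  have hTT' : T ≤ T' := le_max_left _ _
  obtain ⟨l, hl⟩ := hz (T' + 1) (by linarith)
  have key : ∀ k : ℕ, Real.log (1 + ‖a‖) ≤ Fgrowth^[k] T' ∧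
      Fgrowth^[k] T' + 1 ≤ (maxMod a)^[k] (T' + 1) := by
    intro k
    induction k with
    | zero => exact ⟨le_max_right _ _, by simp⟩
    | succ k ih =>
      obtain ⟨ih1, ih2⟩ := ih
      rw [Function.iterate_succ_apply', Function.iterate_succ_apply']
      exact ⟨le_trans ih1 (le_trans (le_refl _) (le_Fg _)), maxMod_key a ih1 ih2⟩
  refine ⟨l, fun k => ?_⟩
  have h1 : Fgrowth^[k] T ≤ Fgrowth^[k] T' := Fg_mono.iterate k hTT'
  have h2 := (key k).2
  have h3 := hl k
  have he : k + l = l + k := Nat.add_comm k l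
  rw [he] at h3
  linarith

private lemma fastEscaping_main2 (a z : ℂ)
    (h : ∃ T > (0 : ℝ), ∃ n₀ : ℕ, ∀ k : ℕ, Fgrowth^[k] T ≤ ‖(expMap a)^[n₀ + k] z‖) :
    z ∈ fastEscapingSet a := by
  obtain ⟨T, hT, n₀, hTz⟩ := h
  intro R hR
  have b0 : (0:ℝ) ≤ ‖a‖ := norm_nonneg a
  set s := ‖a‖ + 1 with hs
  have hs1 : (1:ℝ) ≤ s := by linarith
  set t₀ := s + Real.log (2 * s) with ht₀
  obtain ⟨j, hj⟩ := Fg_unbounded hT (max t₀ (R + s))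
  set S := Fgrowth^[j] T with hSdef
  have hS1 : t₀ ≤ S := le_trans (le_max_left _ _) hj
  have hS2 : R + s ≤ S := le_trans (le_max_right _ _) hj
  have inv : ∀ n : ℕ, (maxMod a)^[n] R ≤ Fgrowth^[n] S - s := by
    intro n
    induction n with
    | zero => simpa using by linarith
    | succ n ih =>
      rw [Function.iterate_succ_apply', Function.iterate_succ_apply']
      have ht : t₀ ≤ Fgrowth^[n] S := le_trans hS1 (le_Fg_iter S n)
      set t := Fgrowth^[n] S with htdef
      have step1 : maxMod a ((maxMod a)^[n] R) ≤ Real.exp ((maxMod a)^[n] R) + ‖a‖ :=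
        maxMod_le a _
      have step2 : Real.exp ((maxMod a)^[n] R) ≤ Real.exp (t - s) :=
        Real.exp_le_exp.2 (by linarith)
      have h2s : 2 * s ≤ Real.exp (t - s) := by
        calc 2 * s = Real.exp (Real.log (2 * s)) := (Real.exp_log (by linarith)).symm
          _ ≤ Real.exp (t - s) := Real.exp_le_exp.2 (by rw [ht₀] at ht; linarith)
      have hsplit : Real.exp t = Real.exp (t - s) * Real.exp s := by
        rw [← Real.exp_add]; ring_nf
      have hes : s + 1 ≤ Real.exp s := by linarith [Real.add_one_le_exp s]
      have hmul : Real.exp (t - s) * 2 ≤ Real.exp (t - s) * Real.exp s :=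
        mul_le_mul_of_nonneg_left (by linarith) (Real.exp_pos _).le
      have hexp : Real.exp (t - s) + 2 * s ≤ Real.exp t := by linarith
      have hF : Fgrowth t = Real.exp t - 1 := rfl
      rw [hF]
      linarith
  refine ⟨n₀ + j, fun n => ?_⟩
  have h1 := inv n
  have h2 : Fgrowth^[n] S = Fgrowth^[n + j] T := (Function.iterate_add_apply Fgrowth n j T).symm
  have h3 := hTz (n + j)
  have he : n₀ + (n + j) = n + (n₀ + j) := by omega
  rw [he] at h3
  linarith

/-- **Characterisation of the fast escaping set via `F(t) = e^t - 1`.** A point `z`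
is in `A(f_a)` iff there are `T > 0` and `n₀` with `|f_a^{n₀+k}(z)| ≥ F^k(T)` for all
`k`, iff for every `T > 0` there is such an `n₀`. -/
theorem fastEscaping_iff_Fgrowth (a z : ℂ) :
    (z ∈ fastEscapingSet a ↔
      ∃ T > (0 : ℝ), ∃ n₀ : ℕ, ∀ k : ℕ, Fgrowth^[k] T ≤ ‖(expMap a)^[n₀ + k] z‖) ∧
    (z ∈ fastEscapingSet a ↔
      ∀ T > (0 : ℝ), ∃ n₀ : ℕ, ∀ k : ℕ, Fgrowth^[k] T ≤ ‖(expMap a)^[n₀ + k] z‖) := by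
  exact ⟨⟨fun h => ⟨1, one_pos, fastEscaping_main1 a z h 1 one_pos⟩, fastEscaping_main2 a z⟩,
    ⟨fun h => fastEscaping_main1 a z h,
     fun h => fastEscaping_main2 a z ⟨1, one_pos, h 1 one_pos⟩⟩⟩
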